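/- arXiv:2403.04694 — 10 statements merged into one kernel-verified Lean document; each statement's English description precedes it below -/
import Mathlib

section
/- For every finite proper interval graph G, the domination number equals the [1,2]-domination number: γ(G) = γ_{[1,2]}(G). -/
/-- `(l, r)` is an interval representation of `G` by closed real intervals:
each vertex `v` gets the nonempty closed interval `[l v, r v]`, and distinct
vertices are adjacent iff their intervals intersect. -/
def IsIntervalRep {V : Type*} (G : SimpleGraph V) (l r : V → ℝ) : Prop :=
  (∀ v : V, l v ≤ r v) ∧
  ∀ u v : V, u ≠ v → (G.Adj u v ↔ (Set.Icc (l u) (r u) ∩ Set.Icc (l v) (r v)).Nonempty)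

/-- The representation is proper: no interval is properly contained in another. -/
def IsProperRep {V : Type*} (l r : V → ℝ) : Prop :=
  ∀ u v : V, ¬ Set.Icc (l u) (r u) ⊂ Set.Icc (l v) (r v)

/-- `D` is a dominating set of `G`. -/
def IsDomSet {V : Type*} [Fintype V] [DecidableEq V] (G : SimpleGraph V)
    [DecidableRel G.Adj] (D : Finset V) : Prop :=
  ∀ v : V, v ∉ D → ∃ u ∈ D, G.Adj v u

/-- `D` is a `[1,2]`-dominating set of `G`: every vertex outside `D` has at least
one and at most two neighbors in `D`. -/
def IsDom12Set {V : Type*} [Fintype V] [DecidableEq V] (G : SimpleGraph V)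
    [DecidableRel G.Adj] (D : Finset V) : Prop :=
  ∀ v : V, v ∉ D →
    1 ≤ (D.filter (fun u => G.Adj v u)).card ∧ (D.filter (fun u => G.Adj v u)).card ≤ 2

/-- The domination number `γ(G)`. -/
noncomputable def domNum {V : Type*} [Fintype V] [DecidableEq V] (G : SimpleGraph V)
    [DecidableRel G.Adj] : ℕ :=
  sInf {k : ℕ | ∃ D : Finset V, IsDomSet G D ∧ D.card = k}

/-- The `[1,2]`-domination number `γ_{[1,2]}(G)`. -/
noncomputable def dom12Num {V : Type*} [Fintype V] [DecidableEq V] (G : SimpleGraph V)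
    [DecidableRel G.Adj] : ℕ :=
  sInf {k : ℕ | ∃ D : Finset V, IsDom12Set G D ∧ D.card = k}

/-- `G` is claw-free: no vertex has three pairwise nonadjacent neighbors. -/
def ClawFree {V : Type*} (G : SimpleGraph V) : Prop :=
  ¬ ∃ (v a b c : V), G.Adj v a ∧ G.Adj v b ∧ G.Adj v c ∧
      a ≠ b ∧ a ≠ c ∧ b ≠ c ∧ ¬ G.Adj a b ∧ ¬ G.Adj a c ∧ ¬ G.Adj b c

/-- For every finite proper interval graph `G`, the domination number equals the
`[1,2]`-domination number. -/
theorem domNum_eq_dom12Num_of_properIntervalGraph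
    {V : Type*} [Fintype V] [DecidableEq V] (G : SimpleGraph V) [DecidableRel G.Adj]
    (l r : V → ℝ) (hrep : IsIntervalRep G l r) (hproper : IsProperRep l r) :
    domNum G = dom12Num G := by
  classical
  have hlr : ∀ v, l v ≤ r v := hrep.1
  -- From properness: endpoints are comonotone.
  have hmono : ∀ x y : V, l x ≤ l y → r x ≤ r y := by
    intro x y hxy
    by_contra hc
    push_neg at hc
    apply hproper y x
    rw [ssubset_iff_subset_ne]
    refine ⟨Set.Icc_subset_Icc hxy hc.le, fun h => ?_⟩
    have hx : r x ∈ Set.Icc (l y) (r y) := by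
      rw [h]; exact Set.right_mem_Icc.mpr (hlr x)
    exact absurd hx.2 (not_le.mpr hc)
  -- Adjacency in terms of endpoints.
  have hadj : ∀ u w : V, u ≠ w → (G.Adj u w ↔ (l u ≤ r w ∧ l w ≤ r u)) := by
    intro u w huw
    rw [hrep.2 u w huw, Set.Icc_inter_Icc, Set.nonempty_Icc]
    constructor
    · intro h
      exact ⟨(le_sup_left.trans h).trans inf_le_right,
        (le_sup_right.trans h).trans inf_le_left⟩
    · intro h
      exact sup_le (le_inf (hlr u) h.1) (le_inf h.2 (hlr w))
  -- The whole vertex set is dominating.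
  have hne : {k : ℕ | ∃ D : Finset V, IsDomSet G D ∧ D.card = k}.Nonempty :=
    ⟨(Finset.univ : Finset V).card, Finset.univ,
      fun v hv => absurd (Finset.mem_univ v) hv, rfl⟩
  obtain ⟨D0, hD0dom, hD0card⟩ := Nat.sInf_mem hne
  have hD0card' : D0.card = domNum G := hD0card
  have hcard_min : ∀ E : Finset V, IsDomSet G E → domNum G ≤ E.card :=
    fun E hE => Nat.sInf_le ⟨E, hE, rfl⟩
  -- Choose a minimum dominating set with minimal sum of left endpoints.
  set S : Finset (Finset V) :=
    Finset.univ.filter (fun E => IsDomSet G E ∧ E.card = domNum G) with hSdef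
  have hSne : S.Nonempty := ⟨D0, by simp [hSdef, hD0dom, hD0card']⟩
  obtain ⟨D, hDS, hmin⟩ := Finset.exists_min_image S (fun E => ∑ d ∈ E, l d) hSne
  simp only [hSdef, Finset.mem_filter, Finset.mem_univ, true_and] at hDS
  obtain ⟨hDdom, hDcard⟩ := hDS
  have hsum_min : ∀ E : Finset V, IsDomSet G E → E.card = domNum G →
      ∑ d ∈ D, l d ≤ ∑ d ∈ E, l d := by
    intro E h1 h2
    exact hmin E (by simp [hSdef, h1, h2])
  -- Removing an element of D cannot keep it dominating.
  have herase : ∀ x ∈ D, IsDomSet G (D.erase x) → False := by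
    intro x hx hdom
    have h1 := hcard_min _ hdom
    rw [Finset.card_erase_of_mem hx] at h1
    have h2 : 0 < D.card := Finset.card_pos.mpr ⟨x, hx⟩
    omega
  -- Key contradiction for three dominators sorted by left endpoints.
  have key : ∀ v a b c : V, v ∉ D → a ∈ D → b ∈ D → c ∈ D → a ≠ b → b ≠ c →
      G.Adj v a → G.Adj v b → G.Adj v c → l a ≤ l b → l b ≤ l c → False := by
    intro v a b c hv ha hb hc hab hbc hva hvb hvc hlab hlbc
    have hvna : v ≠ a := fun h => hv (h ▸ ha)
    have hvnb : v ≠ b := fun h => hv (h ▸ hb)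
    have hvnc : v ≠ c := fun h => hv (h ▸ hc)
    have hVA := (hadj v a hvna).mp hva
    have hVB := (hadj v b hvnb).mp hvb
    have hVC := (hadj v c hvnc).mp hvc
    -- No two members of D have identical intervals.
    have htwin : ∀ x y : V, x ∈ D → y ∈ D → x ≠ y → l x = l y → False := by
      intro x y hx hy hxy hlxy
      have hrxy : r x = r y := le_antisymm (hmono _ _ hlxy.le) (hmono _ _ hlxy.ge)
      apply herase x hx
      intro w hw
      by_cases hwx : w = x
      · subst hwx
        exact ⟨y, Finset.mem_erase.mpr ⟨Ne.symm hxy, hy⟩,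
          (hadj w y hxy).mpr ⟨by linarith [hlr w], by linarith [hlr w]⟩⟩
      · have hwD : w ∉ D := fun h => hw (Finset.mem_erase.mpr ⟨hwx, h⟩)
        obtain ⟨u, hu, hadjwu⟩ := hDdom w hwD
        by_cases hux : u = x
        · rw [hux] at hadjwu
          have hWX := (hadj w x hwx).mp hadjwu
          have hwny : w ≠ y := fun h => hwD (h ▸ hy)
          exact ⟨y, Finset.mem_erase.mpr ⟨Ne.symm hxy, hy⟩,
            (hadj w y hwny).mpr ⟨by linarith [hWX.1], by linarith [hWX.2]⟩⟩
        · exact ⟨u, Finset.mem_erase.mpr ⟨hux, hu⟩, hadjwu⟩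
    rcases eq_or_lt_of_le hlab with heq | hlab'
    · exact htwin a b ha hb hab heq
    rcases eq_or_lt_of_le hlbc with heq | hlbc'
    · exact htwin b c hb hc hbc heq
    rcases lt_or_ge (l v) (l b) with hvltb | hblev
    · -- Swap b for v: strictly smaller endpoint sum.
      have hvDe : v ∉ D.erase b := fun h => hv (Finset.mem_of_mem_erase h)
      have hdom' : IsDomSet G (insert v (D.erase b)) := by
        intro w hw
        by_cases hwb : w = b
        · subst hwb
          exact ⟨v, Finset.mem_insert_self _ _, hvb.symm⟩
        · have hwD : w ∉ D := fun h =>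
            hw (Finset.mem_insert_of_mem (Finset.mem_erase.mpr ⟨hwb, h⟩))
          obtain ⟨u, hu, hadjwu⟩ := hDdom w hwD
          by_cases hub : u = b
          · rw [hub] at hadjwu
            have hwv : w ≠ v := fun h => hw (h ▸ Finset.mem_insert_self _ _)
            have hWB := (hadj w b hwb).mp hadjwu
            rcases le_total (l w) (l b) with h1 | h1
            · rcases le_total (l w) (l a) with h2 | h2
              · have hwna : w ≠ a := fun h => hwD (h ▸ ha)
                exact ⟨a, Finset.mem_insert_of_mem (Finset.mem_erase.mpr ⟨hab, ha⟩),
                  (hadj w a hwna).mpr ⟨h2.trans (hlr a), hlab.trans hWB.2⟩⟩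
              · exact ⟨v, Finset.mem_insert_self _ _,
                  (hadj w v hwv).mpr ⟨h1.trans hVB.2, hVA.1.trans (hmono a w h2)⟩⟩
            · rcases le_total (l c) (l w) with h2 | h2
              · have hwnc : w ≠ c := fun h => hwD (h ▸ hc)
                exact ⟨c, Finset.mem_insert_of_mem
                    (Finset.mem_erase.mpr ⟨Ne.symm hbc, hc⟩),
                  (hadj w c hwnc).mpr ⟨hWB.1.trans (hmono b c hlbc), h2.trans (hlr w)⟩⟩
              · exact ⟨v, Finset.mem_insert_self _ _,
                  (hadj w v hwv).mpr ⟨h2.trans hVC.2, hVB.1.trans (hmono b w h1)⟩⟩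
          · exact ⟨u, Finset.mem_insert_of_mem (Finset.mem_erase.mpr ⟨hub, hu⟩), hadjwu⟩
      have hcard' : (insert v (D.erase b)).card = domNum G := by
        rw [Finset.card_insert_of_notMem hvDe, Finset.card_erase_of_mem hb]
        have : 0 < D.card := Finset.card_pos.mpr ⟨b, hb⟩
        omega
      have hle := hsum_min _ hdom' hcard'
      rw [Finset.sum_insert hvDe] at hle
      have hsub := Finset.add_sum_erase D l hb
      linarith
    · -- l b ≤ l v : then a and b are adjacent; swap a for a private neighbor of a.
      have habadj : G.Adj a b := (hadj a b hab).mpr ⟨hlab.trans (hlr b), hblev.trans hVA.1⟩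
      have hABi := (hadj a b hab).mp habadj
      -- any private neighbor of a lies strictly left of a
      have hpriv : ∀ y : V, y ∉ D → G.Adj y a → ¬ G.Adj y b → l y < l a := by
        intro y hyD hya hyb
        by_contra hcon
        push_neg at hcon
        have hyna : y ≠ a := fun h => hyD (h ▸ ha)
        have hYA := (hadj y a hyna).mp hya
        have hynb : y ≠ b := fun h => hyD (h ▸ hb)
        exact hyb ((hadj y b hynb).mpr
          ⟨hYA.1.trans (hmono a b hlab), hABi.2.trans (hmono a y hcon)⟩)
      have hnotdom : ¬ IsDomSet G (D.erase a) := fun h => herase a ha h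
      rw [IsDomSet] at hnotdom
      push_neg at hnotdom
      obtain ⟨z, hz1, hz2⟩ := hnotdom
      have hzna : z ≠ a := by
        intro h
        subst h
        exact hz2 b (Finset.mem_erase.mpr ⟨Ne.symm hab, hb⟩) habadj
      have hzD : z ∉ D := fun h => hz1 (Finset.mem_erase.mpr ⟨hzna, h⟩)
      have hza : G.Adj z a := by
        obtain ⟨u, hu, h⟩ := hDdom z hzD
        by_cases hua : u = a
        · exact hua ▸ h
        · exact absurd h (hz2 u (Finset.mem_erase.mpr ⟨hua, hu⟩))
      have hzb : ¬ G.Adj z b := hz2 b (Finset.mem_erase.mpr ⟨Ne.symm hab, hb⟩)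
      have hzla : l z < l a := hpriv z hzD hza hzb
      have hZA := (hadj z a hzna).mp hza
      have hdom' : IsDomSet G (insert z (D.erase a)) := by
        intro w hw
        by_cases hwa : w = a
        · subst hwa
          exact ⟨z, Finset.mem_insert_self _ _, hza.symm⟩
        · have hwD : w ∉ D := fun h =>
            hw (Finset.mem_insert_of_mem (Finset.mem_erase.mpr ⟨hwa, h⟩))
          by_cases hex : ∃ u ∈ D.erase a, G.Adj w u
          · obtain ⟨u, hu, h⟩ := hex
            exact ⟨u, Finset.mem_insert_of_mem hu, h⟩
          · push_neg at hex
            obtain ⟨u, hu, hadjwu⟩ := hDdom w hwD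
            have hua : u = a := by
              by_contra h
              exact hex u (Finset.mem_erase.mpr ⟨h, hu⟩) hadjwu
            rw [hua] at hadjwu
            have hwb' : ¬ G.Adj w b := hex b (Finset.mem_erase.mpr ⟨Ne.symm hab, hb⟩)
            have hwla : l w < l a := hpriv w hwD hadjwu hwb'
            have hWA := (hadj w a hwa).mp hadjwu
            have hwz : w ≠ z := fun h => hw (h ▸ Finset.mem_insert_self _ _)
            exact ⟨z, Finset.mem_insert_self _ _,
              (hadj w z hwz).mpr ⟨hwla.le.trans hZA.2, hzla.le.trans hWA.2⟩⟩
      have hzDe : z ∉ D.erase a := hz1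
      have hcard' : (insert z (D.erase a)).card = domNum G := by
        rw [Finset.card_insert_of_notMem hzDe, Finset.card_erase_of_mem ha]
        have : 0 < D.card := Finset.card_pos.mpr ⟨a, ha⟩
        omega
      have hle := hsum_min _ hdom' hcard'
      rw [Finset.sum_insert hzDe] at hle
      have hsub := Finset.add_sum_erase D l ha
      linarith
  -- D is a [1,2]-dominating set.
  have h12 : IsDom12Set G D := by
    intro v hv
    obtain ⟨u, hu, hadjvu⟩ := hDdom v hv
    refine ⟨Finset.card_pos.mpr ⟨u, Finset.mem_filter.mpr ⟨hu, hadjvu⟩⟩, ?_⟩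
    by_contra hgt
    push_neg at hgt
    obtain ⟨a, b, c, ha, hb, hc, hab, hac, hbc⟩ := Finset.two_lt_card_iff.mp hgt
    rw [Finset.mem_filter] at ha hb hc
    obtain ⟨haD, hva⟩ := ha
    obtain ⟨hbD, hvb⟩ := hb
    obtain ⟨hcD, hvc⟩ := hc
    rcases le_total (l a) (l b) with h1 | h1 <;>
      rcases le_total (l b) (l c) with h2 | h2 <;>
      rcases le_total (l a) (l c) with h3 | h3
    · exact key v a b c hv haD hbD hcD hab hbc hva hvb hvc h1 h2
    · exact key v a b c hv haD hbD hcD hab hbc hva hvb hvc h1 h2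
    · exact key v a c b hv haD hcD hbD hac (Ne.symm hbc) hva hvc hvb h3 h2
    · exact key v c a b hv hcD haD hbD (Ne.symm hac) hab hvc hva hvb h3 h1
    · exact key v b a c hv hbD haD hcD (Ne.symm hab) hac hvb hva hvc h1 h3
    · exact key v b c a hv hbD hcD haD hbc (Ne.symm hac) hvb hvc hva h2 h3
    · exact key v c b a hv hcD hbD haD (Ne.symm hbc) (Ne.symm hab) hvc hvb hva h2 h1
    · exact key v c b a hv hcD hbD haD (Ne.symm hbc) (Ne.symm hab) hvc hvb hva h2 h1
  have hle1 : dom12Num G ≤ domNum G := Nat.sInf_le ⟨D, h12, hDcard⟩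
  have hle2 : domNum G ≤ dom12Num G := by
    have hne12 : {k : ℕ | ∃ E : Finset V, IsDom12Set G E ∧ E.card = k}.Nonempty :=
      ⟨(Finset.univ : Finset V).card, Finset.univ,
        fun v hv => absurd (Finset.mem_univ v) hv, rfl⟩
    obtain ⟨E, hE12, hEcard⟩ := Nat.sInf_mem hne12
    have hEdom : IsDomSet G E := by
      intro w hw
      obtain ⟨hc1, -⟩ := hE12 w hw
      obtain ⟨u, hu⟩ := Finset.card_pos.mp hc1
      rw [Finset.mem_filter] at hu
      exact ⟨u, hu.1, hu.2⟩
    calc domNum G ≤ E.card := hcard_min E hEdom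
      _ = dom12Num G := hEcard
  exact le_antisymm hle2 hle1
end

section
/- For every finite claw-free graph G, the domination number equals the [1,2]-domination number: γ(G) = γ_{[1,2]}(G). -/
private lemma dom12_isDom {V : Type*} [Fintype V] [DecidableEq V] (G : SimpleGraph V)
    [DecidableRel G.Adj] {D : Finset V} (h : IsDom12Set G D) : IsDomSet G D := by
  intro v hv
  obtain ⟨h1, _⟩ := h v hv
  obtain ⟨u, hu⟩ := Finset.card_pos.mp h1
  simp only [Finset.mem_filter] at hu
  exact ⟨u, hu.1, hu.2⟩

/-- For every finite claw-free graph `G`, the domination number equals the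
`[1,2]`-domination number. -/
theorem domNum_eq_dom12Num_of_clawFree
    {V : Type*} [Fintype V] [DecidableEq V] (G : SimpleGraph V) [DecidableRel G.Adj]
    (hcf : ClawFree G) :
    domNum G = dom12Num G := by
  have hS : {k : ℕ | ∃ D : Finset V, IsDomSet G D ∧ D.card = k}.Nonempty :=
    ⟨Fintype.card V, Finset.univ, fun v hv => absurd (Finset.mem_univ v) hv, Finset.card_univ⟩
  have hS12 : {k : ℕ | ∃ D : Finset V, IsDom12Set G D ∧ D.card = k}.Nonempty :=
    ⟨Fintype.card V, Finset.univ, fun v hv => absurd (Finset.mem_univ v) hv, Finset.card_univ⟩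
  have h1 : domNum G ≤ dom12Num G := by
    obtain ⟨D, hD, hcard⟩ := Nat.sInf_mem hS12
    exact Nat.sInf_le ⟨D, dom12_isDom G hD, hcard⟩
  have h2 : dom12Num G ≤ domNum G := by
    classical
    set e : Finset V → ℕ := fun D => ((D ×ˢ D).filter (fun p => G.Adj p.1 p.2)).card with he
    have hT : {k : ℕ | ∃ D : Finset V, (IsDomSet G D ∧ D.card = domNum G) ∧ e D = k}.Nonempty := by
      obtain ⟨D, hD, hc⟩ := Nat.sInf_mem hS
      exact ⟨e D, D, ⟨hD, hc⟩, rfl⟩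
    obtain ⟨D, ⟨hDdom, hDcard⟩, hDe⟩ := Nat.sInf_mem hT
    -- D is independent
    have hind : ∀ a ∈ D, ∀ b ∈ D, ¬ G.Adj a b := by
      by_contra h
      push_neg at h
      obtain ⟨a, ha, b, hb, hab⟩ := h
      have hane : a ≠ b := G.ne_of_adj hab
      have hner : ¬ IsDomSet G (D.erase a) := by
        intro hcon
        have h1' : domNum G ≤ (D.erase a).card := Nat.sInf_le ⟨_, hcon, rfl⟩
        have h2' := Finset.card_erase_of_mem ha
        have h3' : 0 < D.card := Finset.card_pos.mpr ⟨a, ha⟩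
        omega
      rw [IsDomSet] at hner
      push_neg at hner
      obtain ⟨w, hw1, hw2⟩ := hner
      have hwa : w ≠ a := by
        rintro rfl
        exact hw2 b (Finset.mem_erase.mpr ⟨hane.symm, hb⟩) hab
      have hwD : w ∉ D := fun h => hw1 (Finset.mem_erase.mpr ⟨hwa, h⟩)
      have hwadj : G.Adj w a := by
        obtain ⟨u, hu, hadj⟩ := hDdom w hwD
        rcases eq_or_ne u a with h | hne
        · exact h ▸ hadj
        · exact absurd hadj (hw2 u (Finset.mem_erase.mpr ⟨hne, hu⟩))
      set D' := insert w (D.erase a) with hD'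
      have hwer : w ∉ D.erase a := hw1
      have hcard' : D'.card = D.card := by
        rw [hD', Finset.card_insert_of_notMem hwer, Finset.card_erase_of_mem ha]
        have h3' : 0 < D.card := Finset.card_pos.mpr ⟨a, ha⟩
        omega
      have hdom' : IsDomSet G D' := by
        intro v hv
        by_cases hvD : v ∈ D
        · have hva : v = a := by
            by_contra hne
            exact hv (Finset.mem_insert_of_mem (Finset.mem_erase.mpr ⟨hne, hvD⟩))
          exact ⟨b, Finset.mem_insert_of_mem (Finset.mem_erase.mpr ⟨hane.symm, hb⟩),
            hva ▸ hab⟩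
        · obtain ⟨u, hu, hadj⟩ := hDdom v hvD
          rcases eq_or_ne u a with hua | hne
          · subst hua
            by_cases hoth : ∃ u' ∈ D.erase u, G.Adj v u'
            · obtain ⟨u', hu', ha'⟩ := hoth
              exact ⟨u', Finset.mem_insert_of_mem hu', ha'⟩
            · push_neg at hoth
              have hvw : v ≠ w := fun h => hv (h ▸ Finset.mem_insert_self w _)
              have hvb : ¬ G.Adj v b := hoth b (Finset.mem_erase.mpr ⟨hane.symm, hb⟩)
              have hwb : ¬ G.Adj w b := hw2 b (Finset.mem_erase.mpr ⟨hane.symm, hb⟩)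
              have hvwadj : G.Adj v w := by
                by_contra hnvw
                exact hcf ⟨u, v, w, b, hadj.symm, hwadj.symm, hab, hvw,
                  (fun h => hvD (h ▸ hb)), (fun h => hwD (h ▸ hb)), hnvw, hvb, hwb⟩
              exact ⟨w, Finset.mem_insert_self w _, hvwadj⟩
          · exact ⟨u, Finset.mem_insert_of_mem (Finset.mem_erase.mpr ⟨hne, hu⟩), hadj⟩
      have hkey : ∀ x ∈ D', ∀ y ∈ D', G.Adj x y → x ∈ D := by
        intro x hx y hy hadj
        rcases Finset.mem_insert.mp hx with rfl | hx'
        · rcases Finset.mem_insert.mp hy with rfl | hy'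
          · exact absurd hadj (G.irrefl)
          · exact absurd hadj (hw2 y hy')
        · exact Finset.mem_of_mem_erase hx'
      have hsub : ((D' ×ˢ D').filter (fun p => G.Adj p.1 p.2)) ⊂
          ((D ×ˢ D).filter (fun p => G.Adj p.1 p.2)) := by
        constructor
        · intro p hp
          simp only [Finset.mem_filter, Finset.mem_product] at hp ⊢
          obtain ⟨⟨hp1, hp2⟩, hadj⟩ := hp
          exact ⟨⟨hkey p.1 hp1 p.2 hp2 hadj, hkey p.2 hp2 p.1 hp1 hadj.symm⟩, hadj⟩
        · intro hcon
          have hmem : (a, b) ∈ ((D ×ˢ D).filter (fun p => G.Adj p.1 p.2)) := by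
            simp only [Finset.mem_filter, Finset.mem_product]
            exact ⟨⟨ha, hb⟩, hab⟩
          have hmem' := hcon hmem
          simp only [Finset.mem_filter, Finset.mem_product] at hmem'
          have haD' : a ∈ D' := hmem'.1.1
          rcases Finset.mem_insert.mp haD' with h | h
          · exact hwD (h ▸ ha)
          · exact (Finset.mem_erase.mp h).1 rfl
      have hlt : e D' < e D := Finset.card_lt_card hsub
      have hle : sInf {k : ℕ | ∃ D : Finset V, (IsDomSet G D ∧ D.card = domNum G) ∧ e D = k}
          ≤ e D' := Nat.sInf_le ⟨D', ⟨hdom', by rw [hcard', hDcard]⟩, rfl⟩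
      omega
    have hdom12 : IsDom12Set G D := by
      intro v hv
      constructor
      · obtain ⟨u, hu, hadj⟩ := hDdom v hv
        exact Finset.card_pos.mpr ⟨u, Finset.mem_filter.mpr ⟨hu, hadj⟩⟩
      · by_contra hgt
        push_neg at hgt
        obtain ⟨x, y, z, hx, hy, hz, hxy, hxz, hyz⟩ := Finset.two_lt_card_iff.mp hgt
        simp only [Finset.mem_filter] at hx hy hz
        exact hcf ⟨v, x, y, z, hx.2, hy.2, hz.2, hxy, hxz, hyz,
          hind x hx.1 y hy.1, hind x hx.1 z hz.1, hind y hy.1 z hz.1⟩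
    exact Nat.sInf_le ⟨D, hdom12, hDcard⟩
  omega
end

section
/- For each finite interval graph G = (V,E) of order n, there exists a bijective numbering σ : V → {1,2,…,n} of the vertices such that for all vertices u, v, w with σ(u) < σ(v) < σ(w), if u is adjacent to w then v is adjacent to w. -/
/-- Every finite interval graph of order `n` admits a numbering `σ : V ≃ Fin n` of its
vertices such that whenever `σ u < σ v < σ w` and `u` is adjacent to `w`, also `v` is
adjacent to `w`. -/
theorem exists_goodNumbering_of_intervalGraph
    {V : Type*} [Fintype V] (G : SimpleGraph V) (n : ℕ) (hn : Fintype.card V = n)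
    (l r : V → ℝ) (hrep : IsIntervalRep G l r) :
    ∃ σ : V ≃ Fin n, ∀ u v w : V, σ u < σ v → σ v < σ w → G.Adj u w → G.Adj v w := by
  classical
  obtain ⟨hle, hadjiff⟩ := hrep
  let e : V ≃ Fin n := Fintype.equivFinOfCardEq hn
  let f : V → ℝ ×ₗ Fin n := fun v => toLex (r v, e v)
  have hf : Function.Injective f := by
    intro a b h
    exact e.injective (congrArg (fun x => (ofLex x).2) h)
  let s : Finset (ℝ ×ₗ Fin n) := Finset.univ.image f
  have hs : s.card = n := by
    rw [Finset.card_image_of_injective _ hf, Finset.card_univ, hn]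
  let iso := s.orderIsoOfFin hs
  have gmem : ∀ v : V, f v ∈ s := fun v => Finset.mem_image_of_mem f (Finset.mem_univ v)
  let g : V ≃ s := Equiv.ofBijective (fun v => ⟨f v, gmem v⟩)
    ⟨fun a b h => hf (Subtype.ext_iff.mp h), by
      rintro ⟨x, hx⟩
      obtain ⟨v, _, hv⟩ := Finset.mem_image.mp hx
      exact ⟨v, Subtype.ext hv⟩⟩
  refine ⟨g.trans iso.symm.toEquiv, ?_⟩
  have mono : ∀ a b : V, (g.trans iso.symm.toEquiv) a < (g.trans iso.symm.toEquiv) b →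
      r a ≤ r b := by
    intro a b h
    have h2 : g a < g b := iso.symm.lt_iff_lt.mp h
    have h3 : f a < f b := h2
    rcases (Prod.Lex.lt_iff).mp h3 with h4 | ⟨h4, _⟩
    · exact le_of_lt h4
    · exact le_of_eq h4
  intro u v w huv hvw hadj
  have hvw' : v ≠ w := fun h => by simp [h] at hvw
  have huw' : u ≠ w := fun h => by exact absurd (huv.trans hvw) (by simp [h])
  have hrv : r u ≤ r v := mono u v huv
  have hint := (hadjiff u w huw').mp hadj
  obtain ⟨x, ⟨hxu1, hxu2⟩, hxw1, hxw2⟩ := hint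
  have hlw : l w ≤ r v := le_trans (le_trans hxw1 hxu2) hrv
  refine (hadjiff v w hvw').mpr ⟨max (l v) (l w), ⟨le_max_left _ _, ?_⟩,
    le_max_right _ _, ?_⟩
  · exact max_le (hle v) hlw
  · exact max_le (le_trans (hle v) (mono v w hvw)) (hle w)
end

section
/- For each i ∈ [1,n], the set [maxlow(i), i] is a clique of G, i.e., any two distinct vertices of [maxlow(i), i] are adjacent. -/
/-- `G` is a graph with vertex set `{1,…,n}` (all edges lie inside `{1,…,n}`),
whose adjacency satisfies the interval-graph numbering property: whenever
`i < j < k` and `i` is adjacent to `k`, then `j` is adjacent to `k`. -/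
def GoodNumbering (G : SimpleGraph ℕ) (n : ℕ) : Prop :=
  (∀ u v : ℕ, G.Adj u v → u ∈ Finset.Icc 1 n ∧ v ∈ Finset.Icc 1 n) ∧
  (∀ i j k : ℕ, i < j → j < k → G.Adj i k → G.Adj j k)

/-- `low a = min N[a]`, the minimum of the closed neighborhood of `a`. -/
noncomputable def low (G : SimpleGraph ℕ) (a : ℕ) : ℕ :=
  sInf {b : ℕ | b = a ∨ G.Adj a b}

/-- `lowI a b = min {low k : k ∈ [a,b]}`. -/
noncomputable def lowI (G : SimpleGraph ℕ) (a b : ℕ) : ℕ :=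
  sInf (low G '' Set.Icc a b)

/-- `maxlow a = max {low k : low a ≤ k ≤ a}`. -/
noncomputable def maxlow (G : SimpleGraph ℕ) (a : ℕ) : ℕ :=
  sSup (low G '' Set.Icc (low G a) a)


lemma low_le_self (G : SimpleGraph ℕ) (a : ℕ) : low G a ≤ a :=
  Nat.sInf_le (Or.inl rfl)

lemma low_spec (G : SimpleGraph ℕ) (a : ℕ) : low G a = a ∨ G.Adj a (low G a) := by
  have : low G a ∈ {b : ℕ | b = a ∨ G.Adj a b} := Nat.sInf_mem ⟨a, Or.inl rfl⟩
  exact this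

lemma adj_of_low_le (G : SimpleGraph ℕ) (n : ℕ) (hG : GoodNumbering G n)
    {u v : ℕ} (h1 : low G v ≤ u) (h2 : u < v) : G.Adj u v := by
  have hadj : G.Adj (low G v) v := by
    rcases low_spec G v with h | h
    · omega
    · exact h.symm
  rcases eq_or_lt_of_le h1 with h | hlt
  · rw [← h]; exact hadj
  · exact hG.2 _ _ _ hlt h2 hadj

lemma bdd_maxlow (G : SimpleGraph ℕ) (i : ℕ) :
    BddAbove (low G '' Set.Icc (low G i) i) :=
  ((Set.finite_Icc _ _).image _).bddAbove

lemma low_le_maxlow (G : SimpleGraph ℕ) {i v : ℕ} (h1 : low G i ≤ v) (h2 : v ≤ i) :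
    low G v ≤ maxlow G i :=
  le_csSup (bdd_maxlow G i) ⟨v, ⟨h1, h2⟩, rfl⟩

lemma low_le_maxlow_self (G : SimpleGraph ℕ) (i : ℕ) : low G i ≤ maxlow G i :=
  low_le_maxlow G (low_le_self G i) (le_refl _)

/-- For each `i ∈ [1,n]`, the set `[maxlow(i), i]` is a clique of `G`. -/
theorem maxlow_Icc_isClique (G : SimpleGraph ℕ) (n : ℕ) (hn : 1 ≤ n)
    (hG : GoodNumbering G n) (i : ℕ) (hi : i ∈ Finset.Icc 1 n) :
    ∀ u ∈ Finset.Icc (maxlow G i) i, ∀ v ∈ Finset.Icc (maxlow G i) i,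
      u ≠ v → G.Adj u v := by
  intro u hu v hv huv
  simp only [Finset.mem_Icc] at hu hv
  have hli := low_le_maxlow_self G i
  rcases lt_or_gt_of_ne huv with h | h
  · exact adj_of_low_le G n hG (le_trans (low_le_maxlow G (by omega) hv.2) hu.1) h
  · exact (adj_of_low_le G n hG (le_trans (low_le_maxlow G (by omega) hu.2) hv.1) h).symm
end

section
/- For each i ∈ [1,n], there is a vertex k ∈ [maxlow(i), i] such that k is adjacent to no vertex l ∈ [1, maxlow(i)). -/
/-- For each `i ∈ [1,n]`, there is a vertex `k ∈ [maxlow(i), i]` adjacent to no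
vertex `l ∈ [1, maxlow(i))`. -/
theorem exists_vertex_not_adj_below_maxlow (G : SimpleGraph ℕ) (n : ℕ) (hn : 1 ≤ n)
    (hG : GoodNumbering G n) (i : ℕ) (hi : i ∈ Finset.Icc 1 n) :
    ∃ k ∈ Finset.Icc (maxlow G i) i, ∀ l ∈ Finset.Ico 1 (maxlow G i), ¬ G.Adj k l := by
  have hlow_le : ∀ a : ℕ, low G a ≤ a := fun a =>
    Nat.sInf_le (Or.inl rfl)
  have hlow_le_adj : ∀ a b : ℕ, G.Adj a b → low G a ≤ b := fun a b h =>
    Nat.sInf_le (Or.inr h)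
  -- the set in maxlow is nonempty and bounded above
  have hne : (low G '' Set.Icc (low G i) i).Nonempty :=
    ⟨low G i, ⟨i, ⟨hlow_le i, le_rfl⟩, rfl⟩⟩
  have hbdd : BddAbove (low G '' Set.Icc (low G i) i) := by
    refine ⟨i, ?_⟩
    rintro x ⟨k, ⟨_, hk⟩, rfl⟩
    exact le_trans (hlow_le k) hk
  have hmem : maxlow G i ∈ low G '' Set.Icc (low G i) i :=
    Nat.sSup_mem hne hbdd
  obtain ⟨k, ⟨hk1, hk2⟩, hkl⟩ := hmem
  refine ⟨k, ?_, ?_⟩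
  · simp only [Finset.mem_Icc]
    exact ⟨hkl ▸ hlow_le k, hk2⟩
  · intro l hl hadj
    simp only [Finset.mem_Ico] at hl
    have : maxlow G i ≤ l := hkl ▸ hlow_le_adj k l hadj
    omega
end

section
/- Let i ∈ [1,n] and let D be a [1,2]-dominating set of G[1,i] of minimum cardinality among all [1,2]-dominating sets of G[1,i] containing i, with i ∈ D. Suppose D ∩ [1,i) is nonempty with maximum element i', that D ∩ [1,i') is nonempty with maximum element i'', and that low(i) < i''. Then x ∈ D for all x ∈ [low(i), i''). -/
/-- `D` is a `[1,2]`-dominating set of the induced subgraph `G[1,i]`: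
`D ⊆ [1,i]` and every vertex of `[1,i]` outside `D` has at least one and at
most two neighbors in `D`. -/
def Dom12 (G : SimpleGraph ℕ) (i : ℕ) (D : Finset ℕ) : Prop :=
  D ⊆ Finset.Icc 1 i ∧
  ∀ v ∈ Finset.Icc 1 i, v ∉ D →
    1 ≤ {u ∈ (D : Set ℕ) | G.Adj v u}.ncard ∧ {u ∈ (D : Set ℕ) | G.Adj v u}.ncard ≤ 2

/-- The minimum (in `ℕ∞`, with `sInf ∅ = ⊤`) of the cardinalities of the
`[1,2]`-dominating sets `D` of `G[1,i]` satisfying the extra property `P`. -/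
noncomputable def gval (G : SimpleGraph ℕ) (i : ℕ) (P : Finset ℕ → Prop) : ℕ∞ :=
  sInf {k : ℕ∞ | ∃ D : Finset ℕ, Dom12 G i D ∧ P D ∧ (D.card : ℕ∞) = k}

/-- `γ_{[1,2]}(i)`. -/
noncomputable def g12 (G : SimpleGraph ℕ) (i : ℕ) : ℕ∞ :=
  gval G i fun _ => True

/-- `γ⁰_{[1,2]}(j,i)`: no vertex of `[j,i]` is in `D`. -/
noncomputable def g0I (G : SimpleGraph ℕ) (j i : ℕ) : ℕ∞ :=
  gval G i fun D => ∀ x ∈ Finset.Icc j i, x ∉ D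

/-- `γ⁰_{[1,2]}(j,i:k)`: `k ∈ D` and no other vertex of `[j,i]` is in `D`. -/
noncomputable def g0Ik (G : SimpleGraph ℕ) (j i k : ℕ) : ℕ∞ :=
  gval G i fun D => k ∈ D ∧ ∀ x ∈ Finset.Icc j i, x ≠ k → x ∉ D

/-- `γ¹_{[1,2]}(i)`: `i ∈ D`. -/
noncomputable def g1 (G : SimpleGraph ℕ) (i : ℕ) : ℕ∞ :=
  gval G i fun D => i ∈ D

/-- `γ¹_{[1,2]}(j,i:i)`: `i ∈ D` and no vertex of `[j,i)` is in `D`. -/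
noncomputable def g1I (G : SimpleGraph ℕ) (j i : ℕ) : ℕ∞ :=
  gval G i fun D => i ∈ D ∧ ∀ x ∈ Finset.Ico j i, x ∉ D

/-- `γ¹_{[1,2]}(k,i:i,j)`: `i, j ∈ D` and no other vertex of `[k,i)` is in `D`. -/
noncomputable def g1Ij (G : SimpleGraph ℕ) (k i j : ℕ) : ℕ∞ :=
  gval G i fun D => i ∈ D ∧ j ∈ D ∧ ∀ x ∈ Finset.Ico k i, x ≠ j → x ∉ D

/-- `γ¹_{[1,2]}(l,i:i,j,k)`: `i, j, k ∈ D` and no other vertex of `[l,i)` is in `D`. -/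
noncomputable def g1Ijk (G : SimpleGraph ℕ) (l i j k : ℕ) : ℕ∞ :=
  gval G i fun D => i ∈ D ∧ j ∈ D ∧ k ∈ D ∧ ∀ x ∈ Finset.Ico l i, x ≠ j → x ≠ k → x ∉ D

/-- `γ¹¹_{[1,2]}(l,i:i,j,k)`: `i, j ∈ D`, all of `[l,k] ⊆ D`, and no vertex of
`(k,i)` other than `j` is in `D`. -/
noncomputable def g11Ijk (G : SimpleGraph ℕ) (l i j k : ℕ) : ℕ∞ :=
  gval G i fun D => i ∈ D ∧ j ∈ D ∧ (∀ x ∈ Finset.Icc l k, x ∈ D) ∧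
    ∀ x ∈ Finset.Ioo k i, x ≠ j → x ∉ D

/-- Lemma: if `D` is a minimum-cardinality `[1,2]`-dominating set of `G[1,i]` among
those containing `i`, `i' = max (D ∩ [1,i))`, `i'' = max (D ∩ [1,i'))` both exist and
`low(i) < i''`, then every `x ∈ [low(i), i'')` belongs to `D`. -/
theorem mem_of_lt_sndMax (G : SimpleGraph ℕ) (n : ℕ) (hn : 1 ≤ n)
    (hG : GoodNumbering G n) (i : ℕ) (hi : i ∈ Finset.Icc 1 n)
    (D : Finset ℕ) (hD : Dom12 G i D) (hiD : i ∈ D)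
    (hmin : ∀ D' : Finset ℕ, Dom12 G i D' → i ∈ D' → D.card ≤ D'.card)
    (i' i'' : ℕ)
    (hi'mem : i' ∈ D) (hi'lt : i' < i) (hi'max : ∀ x ∈ D, x < i → x ≤ i')
    (hi''mem : i'' ∈ D) (hi''lt : i'' < i') (hi''max : ∀ x ∈ D, x < i' → x ≤ i'')
    (hlow : low G i < i'') :
    ∀ x ∈ Finset.Ico (low G i) i'', x ∈ D := by
  intro x hx
  rw [Finset.mem_Ico] at hx
  obtain ⟨hxl, hxu⟩ := hx
  by_contra hxD
  obtain ⟨hGmem, hGprop⟩ := hG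
  obtain ⟨hDsub, hDdom⟩ := hD
  have hxi' : x < i := lt_trans hxu (lt_trans hi''lt hi'lt)
  have hlowlt : low G i < i := lt_of_le_of_lt hxl hxi'
  have hlowmem : low G i = i ∨ G.Adj i (low G i) :=
    Nat.sInf_mem (⟨i, Or.inl rfl⟩ : Set.Nonempty {b : ℕ | b = i ∨ G.Adj i b})
  have hadjlow : G.Adj i (low G i) := by
    rcases hlowmem with h | h
    · omega
    · exact h
  -- every v with low ≤ v < i is adjacent to i
  have hadjI : ∀ v, low G i ≤ v → v < i → G.Adj v i := by
    intro v hv1 hv2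
    rcases eq_or_lt_of_le hv1 with h | h
    · exact (h ▸ hadjlow).symm
    · exact hGprop _ _ _ h hv2 hadjlow.symm
  have hxi : G.Adj x i := hadjI x hxl hxi'
  have hx1 : 1 ≤ x := (Finset.mem_Icc.mp (hGmem x i hxi).1).1
  have hxIcc : x ∈ Finset.Icc 1 i := Finset.mem_Icc.mpr ⟨hx1, le_of_lt hxi'⟩
  have hSfin : {u ∈ (D : Set ℕ) | G.Adj x u}.Finite :=
    D.finite_toSet.subset fun u hu => hu.1
  have hxcount := hDdom x hxIcc hxD
  -- at most one vertex of D in (x,i) is adjacent to x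
  have huniq : ∀ d₁ ∈ D, ∀ d₂ ∈ D, d₁ < i → d₂ < i → d₁ ≠ d₂ →
      G.Adj x d₁ → G.Adj x d₂ → False := by
    intro d₁ h₁ d₂ h₂ hlt₁ hlt₂ hne ha₁ ha₂
    have hsub : ↑({i, d₁, d₂} : Finset ℕ) ⊆ {u ∈ (D : Set ℕ) | G.Adj x u} := by
      intro u hu
      simp only [Finset.coe_insert, Set.mem_insert_iff, Finset.coe_singleton,
        Set.mem_singleton_iff] at hu
      rcases hu with rfl | rfl | rfl
      · exact ⟨hiD, hxi⟩
      · exact ⟨h₁, ha₁⟩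
      · exact ⟨h₂, ha₂⟩
    have hcard : ({i, d₁, d₂} : Finset ℕ).card = 3 := by
      rw [Finset.card_insert_of_notMem (by simp; omega),
        Finset.card_insert_of_notMem (by simp [hne]), Finset.card_singleton]
    have h3 := Set.ncard_le_ncard hsub hSfin
    rw [Set.ncard_coe_finset, hcard] at h3
    omega
  -- choose the (unique, if any) vertex of D in (x,i) adjacent to x
  obtain ⟨j, hjD, hjx, hji, hjonly⟩ :
      ∃ j, j ∈ D ∧ x < j ∧ j < i ∧ ∀ d ∈ D, x < d → d < i → G.Adj x d → d = j := by
    by_cases hej : ∃ d ∈ D, x < d ∧ d < i ∧ G.Adj x d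
    · obtain ⟨j, hjD, hjx, hji, hja⟩ := hej
      refine ⟨j, hjD, hjx, hji, fun d hd hd1 hd2 hd3 => ?_⟩
      by_contra hne
      exact huniq d hd j hjD hd2 hji hne hd3 hja
    · exact ⟨i', hi'mem, lt_trans hxu hi''lt, hi'lt, fun d hd hd1 hd2 hd3 =>
        absurd ⟨d, hd, hd1, hd2, hd3⟩ hej⟩
  -- every vertex of D in (x,i) other than j has all its neighbors above x
  have hfar : ∀ d ∈ D, x < d → d < i → d ≠ j → ∀ w, G.Adj d w → x < w := by
    intro d hdD hdx hdi hdj w hw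
    by_contra hwx
    push_neg at hwx
    have hadjxd : G.Adj x d := by
      rcases eq_or_lt_of_le hwx with h | h
      · exact h ▸ hw.symm
      · exact hGprop w x d h hdx hw.symm
    exact hdj (hjonly d hdD hdx hdi hadjxd)
  -- the smaller dominating set
  set D' : Finset ℕ := D.filter (· ≤ x) ∪ {j, i} with hD'def
  have hjD' : j ∈ D' := Finset.mem_union_right _ (by simp)
  have hiD' : i ∈ D' := Finset.mem_union_right _ (by simp)
  have hD'subD : D' ⊆ D := by
    intro u hu
    rcases Finset.mem_union.mp hu with hu | hu
    · exact (Finset.mem_filter.mp hu).1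
    · rcases Finset.mem_insert.mp hu with rfl | hu
      · exact hjD
      · rw [Finset.mem_singleton] at hu; exact hu ▸ hiD
  have hD'mem_gt : ∀ u ∈ D', x < u → u = j ∨ u = i := by
    intro u hu hxu'
    rcases Finset.mem_union.mp hu with hu | hu
    · exact absurd (Finset.mem_filter.mp hu).2 (by omega)
    · rcases Finset.mem_insert.mp hu with rfl | hu
      · exact Or.inl rfl
      · exact Or.inr (Finset.mem_singleton.mp hu)
  have hDom' : Dom12 G i D' := by
    constructor
    · exact hD'subD.trans hDsub
    · intro v hv hvD'
      have hv' := Finset.mem_Icc.mp hv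
      have hvfin : {u ∈ (D' : Set ℕ) | G.Adj v u}.Finite :=
        D'.finite_toSet.subset fun u hu => hu.1
      constructor
      · -- lower bound
        have hwit : ∃ u ∈ (D' : Set ℕ), G.Adj v u := by
          rcases lt_trichotomy v x with hvx | rfl | hvx
          · have hvD : v ∉ D := fun h =>
              hvD' (Finset.mem_union_left _ (Finset.mem_filter.mpr ⟨h, le_of_lt hvx⟩))
            have h1 := (hDdom v hv hvD).1
            obtain ⟨e, heD, hev⟩ := Set.nonempty_of_ncard_ne_zero (s := {u ∈ (D : Set ℕ) | G.Adj v u}) (by omega)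
            by_cases hex : e ≤ x
            · exact ⟨e, Finset.mem_coe.mpr
                (Finset.mem_union_left _ (Finset.mem_filter.mpr ⟨heD, hex⟩)), hev⟩
            · push_neg at hex
              by_cases hei : e = i
              · exact ⟨i, hiD', hei ▸ hev⟩
              by_cases hej' : e = j
              · exact ⟨j, hjD', hej' ▸ hev⟩
              · have heIcc := Finset.mem_Icc.mp (hDsub heD)
                have hei' : e < i := lt_of_le_of_ne heIcc.2 hei
                exact absurd (hfar e heD hex hei' hej' v hev.symm) (by omega)
          · exact ⟨i, hiD', hxi⟩
          · have hvi : v < i := lt_of_le_of_ne hv'.2 (fun h => hvD' (h ▸ hiD'))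
            exact ⟨i, hiD', hadjI v (by omega) hvi⟩
        obtain ⟨u, hu, hadj⟩ := hwit
        have : 0 < {u ∈ (D' : Set ℕ) | G.Adj v u}.ncard :=
          (Set.ncard_pos hvfin).mpr ⟨u, hu, hadj⟩
        omega
      · -- upper bound
        by_cases hvD : v ∈ D
        · have hvx : x < v := by
            by_contra h
            push_neg at h
            exact hvD' (Finset.mem_union_left _ (Finset.mem_filter.mpr ⟨hvD, h⟩))
          have hvi : v ≠ i := fun h => hvD' (h ▸ hiD')
          have hvj : v ≠ j := fun h => hvD' (h ▸ hjD')
          have hvi' : v < i := lt_of_le_of_ne hv'.2 hvi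
          have hsub2 : {u ∈ (D' : Set ℕ) | G.Adj v u} ⊆ ({j, i} : Set ℕ) := by
            rintro u ⟨hu, hadj⟩
            have hxu : x < u := hfar v hvD hvx hvi' hvj u hadj
            rcases hD'mem_gt u (Finset.mem_coe.mp hu) hxu with rfl | rfl
            · exact Or.inl rfl
            · exact Or.inr rfl
          calc {u ∈ (D' : Set ℕ) | G.Adj v u}.ncard
              ≤ ({j, i} : Set ℕ).ncard :=
                Set.ncard_le_ncard hsub2 ((Set.finite_singleton i).insert j)
            _ ≤ 2 := by
                have := Set.ncard_insert_le j ({i} : Set ℕ)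
                rw [Set.ncard_singleton] at this
                omega
        · have hsub2 : {u ∈ (D' : Set ℕ) | G.Adj v u} ⊆ {u ∈ (D : Set ℕ) | G.Adj v u} :=
            fun u hu => ⟨hD'subD hu.1, hu.2⟩
          have hfinD : {u ∈ (D : Set ℕ) | G.Adj v u}.Finite :=
            D.finite_toSet.subset fun u hu => hu.1
          exact le_trans (Set.ncard_le_ncard hsub2 hfinD) (hDdom v hv hvD).2
  -- D' is strictly smaller than D
  have hkex : ∃ k ∈ D, k ∉ D' := by
    by_cases hji' : j = i'
    · refine ⟨i'', hi''mem, fun h => ?_⟩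
      rcases hD'mem_gt i'' h hxu with h' | h' <;> omega
    · refine ⟨i', hi'mem, fun h => ?_⟩
      rcases hD'mem_gt i' h (lt_trans hxu hi''lt) with h' | h' <;> omega
  have hss : D' ⊂ D := (Finset.ssubset_iff_of_subset hD'subD).mpr hkex
  have hlt := Finset.card_lt_card hss
  have hle := hmin D' hDom' hiD'
  omega
end

section
/- Let i ∈ [1,n] and b = low(i). If b = i, then γ^1_{[1,2]}(i) = γ_{[1,2]}(i−1) + 1. -/
/-- Lemma (i): if `low(i) = i` then `γ¹_{[1,2]}(i) = γ_{[1,2]}(i-1) + 1`. -/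
theorem g1_eq_of_low_eq_self (G : SimpleGraph ℕ) (n : ℕ) (hn : 1 ≤ n)
    (hG : GoodNumbering G n) (i : ℕ) (hi : i ∈ Finset.Icc 1 n)
    (hb : low G i = i) :
    g1 G i = g12 G (i - 1) + 1 := by
  simp only [Finset.mem_Icc] at hi
  obtain ⟨hi1, hi2⟩ := hi
  -- no neighbor of i is < i
  have hnb : ∀ b, G.Adj i b → i ≤ b := by
    intro b h
    have : b ∈ {b : ℕ | b = i ∨ G.Adj i b} := Or.inr h
    have := Nat.sInf_le this
    rwa [show sInf {b : ℕ | b = i ∨ G.Adj i b} = i from hb] at this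
  have hvadj : ∀ v, v < i → ¬ G.Adj v i := by
    intro v hv h
    exact absurd (hnb v h.symm) (not_le.mpr hv)
  -- filter sets equal when i removed/inserted
  have hset : ∀ (D' : Finset ℕ) (v : ℕ), v < i →
      {u ∈ ((insert i D' : Finset ℕ) : Set ℕ) | G.Adj v u} = {u ∈ (D' : Set ℕ) | G.Adj v u} := by
    intro D' v hv
    ext u
    simp only [Set.mem_setOf_eq, Finset.coe_insert, Set.mem_insert_iff, Finset.mem_coe]
    constructor
    · rintro ⟨h1 | h1, h2⟩
      · exact absurd (h1 ▸ h2) (hvadj v hv)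
      · exact ⟨h1, h2⟩
    · rintro ⟨h1, h2⟩; exact ⟨Or.inr h1, h2⟩
  have hseterase : ∀ (D : Finset ℕ) (v : ℕ), v < i →
      {u ∈ ((D.erase i : Finset ℕ) : Set ℕ) | G.Adj v u} = {u ∈ (D : Set ℕ) | G.Adj v u} := by
    intro D v hv
    ext u
    simp only [Set.mem_setOf_eq, Finset.coe_erase, Set.mem_diff, Finset.mem_coe,
      Set.mem_singleton_iff]
    constructor
    · rintro ⟨⟨h1, _⟩, h2⟩; exact ⟨h1, h2⟩
    · rintro ⟨h1, h2⟩
      refine ⟨⟨h1, ?_⟩, h2⟩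
      rintro rfl; exact hvadj v hv h2
  -- transfer lemmas
  have hA : ∀ D' : Finset ℕ, Dom12 G (i - 1) D' → Dom12 G i (insert i D') := by
    rintro D' ⟨hsub, hdom⟩
    constructor
    · intro x hx
      rcases Finset.mem_insert.mp hx with rfl | hx
      · exact Finset.mem_Icc.mpr ⟨hi1, le_refl _⟩
      · have := Finset.mem_Icc.mp (hsub hx)
        exact Finset.mem_Icc.mpr ⟨this.1, this.2.trans (Nat.sub_le i 1)⟩
    · intro v hv hvD
      have hv' := Finset.mem_Icc.mp hv
      have hvne : v ≠ i := fun h => hvD (h ▸ Finset.mem_insert_self i D')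
      have hvlt : v < i := lt_of_le_of_ne hv'.2 hvne
      have hv1 : v ∈ Finset.Icc 1 (i - 1) :=
        Finset.mem_Icc.mpr ⟨hv'.1, Nat.le_sub_one_of_lt hvlt⟩
      have hvD' : v ∉ D' := fun h => hvD (Finset.mem_insert_of_mem h)
      rw [hset D' v hvlt]
      exact hdom v hv1 hvD'
  have hB : ∀ D : Finset ℕ, Dom12 G i D → Dom12 G (i - 1) (D.erase i) := by
    rintro D ⟨hsub, hdom⟩
    constructor
    · intro x hx
      have hx1 := Finset.mem_of_mem_erase hx
      have hxne := Finset.ne_of_mem_erase hx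
      have := Finset.mem_Icc.mp (hsub hx1)
      exact Finset.mem_Icc.mpr ⟨this.1, Nat.le_sub_one_of_lt (lt_of_le_of_ne this.2 hxne)⟩
    · intro v hv hvD
      have hv' := Finset.mem_Icc.mp hv
      have hvlt : v < i := lt_of_le_of_lt hv'.2 (Nat.sub_lt hi1 one_pos)
      have hvi : v ∈ Finset.Icc 1 i := Finset.mem_Icc.mpr ⟨hv'.1, le_of_lt hvlt⟩
      have hvD2 : v ∉ D := fun h => hvD (Finset.mem_erase.mpr ⟨ne_of_lt hvlt, h⟩)
      rw [hseterase D v hvlt]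
      exact hdom v hvi hvD2
  unfold g1 g12 gval
  apply le_antisymm
  · -- sInf S1 ≤ sInf S2 + 1
    by_cases hne : {k : ℕ∞ | ∃ D : Finset ℕ, Dom12 G (i-1) D ∧ True ∧ (D.card : ℕ∞) = k}.Nonempty
    · obtain ⟨D', hD', -, hcard⟩ := csInf_mem hne
      have hiD' : i ∉ D' := by
        intro h
        have := (Finset.mem_Icc.mp (hD'.1 h)).2
        omega
      apply sInf_le
      refine ⟨insert i D', hA D' hD', Finset.mem_insert_self i D', ?_⟩
      rw [Finset.card_insert_of_notMem hiD', ← hcard]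
      push_cast
      ring
    · rw [Set.not_nonempty_iff_eq_empty.mp hne, sInf_empty]
      simp
  · -- sInf S2 + 1 ≤ sInf S1
    apply le_sInf
    rintro k ⟨D, hD, hiD, hcard⟩
    have h2 : sInf {k : ℕ∞ | ∃ D : Finset ℕ, Dom12 G (i-1) D ∧ True ∧ (D.card : ℕ∞) = k}
        ≤ ((D.erase i).card : ℕ∞) := sInf_le ⟨D.erase i, hB D hD, trivial, rfl⟩
    calc sInf {k : ℕ∞ | ∃ D : Finset ℕ, Dom12 G (i-1) D ∧ True ∧ (D.card : ℕ∞) = k} + 1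
        ≤ ((D.erase i).card : ℕ∞) + 1 := add_le_add h2 le_rfl
      _ = k := by
          rw [← hcard, ← Nat.cast_one, ← Nat.cast_add, Finset.card_erase_add_one hiD]
end

section
/- Let i ∈ [1,n] with b = low(i) > 1 and let j ∈ [1,i). If j ≤ low(b−1), then γ^1_{[1,2]}(j,i:i) = ∞ (i.e., is not defined: there is no [1,2]-dominating set D of G[1,i] with i ∈ D and D ∩ [j,i) = ∅). -/
/-- Lemma (i): with `b = low(i) > 1`, if `j ≤ low(b-1)` then `γ¹_{[1,2]}(j,i:i)` is
not defined (equals `⊤`). -/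
theorem g1I_eq_top_of_le_low (G : SimpleGraph ℕ) (n : ℕ) (hn : 1 ≤ n)
    (hG : GoodNumbering G n) (i j b : ℕ) (hi : i ∈ Finset.Icc 1 n)
    (hbdef : b = low G i) (hb : 1 < b) (hj : j ∈ Finset.Ico 1 i)
    (hjle : j ≤ low G (b - 1)) :
    g1I G j i = ⊤ := by
  have hbi : b ≤ i := hbdef ▸ Nat.sInf_le (Or.inl rfl)
  have hji : j < i := (Finset.mem_Ico.mp hj).2
  have hj1 : 1 ≤ j := (Finset.mem_Ico.mp hj).1
  have hlowle : low G (b - 1) ≤ b - 1 := Nat.sInf_le (Or.inl rfl)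
  have hnadj : ¬ G.Adj (b - 1) i := by
    intro h
    have : low G i ≤ b - 1 := Nat.sInf_le (Or.inr h.symm)
    omega
  have hempty : {k : ℕ∞ | ∃ D : Finset ℕ, Dom12 G i D ∧
      (i ∈ D ∧ ∀ x ∈ Finset.Ico j i, x ∉ D) ∧ (D.card : ℕ∞) = k} = ∅ := by
    ext k
    simp only [Set.mem_setOf_eq, Set.mem_empty_iff_false, iff_false]
    rintro ⟨D, ⟨hDsub, hdom⟩, ⟨hiD, hP⟩, rfl⟩
    have hb1mem : b - 1 ∈ Finset.Icc 1 i := Finset.mem_Icc.mpr ⟨by omega, by omega⟩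
    have hb1notD : b - 1 ∉ D := hP _ (Finset.mem_Ico.mpr ⟨by omega, by omega⟩)
    obtain ⟨h1, _⟩ := hdom _ hb1mem hb1notD
    have hne : {u ∈ (D : Set ℕ) | G.Adj (b - 1) u}.Nonempty := by
      by_contra h
      rw [Set.not_nonempty_iff_eq_empty] at h
      rw [h] at h1
      simp at h1
    obtain ⟨u, huD, hadj⟩ := hne
    have huIcc := hDsub huD
    rw [Finset.mem_Icc] at huIcc
    have hunot : u ∉ Finset.Ico j i := fun h => hP u h huD
    rw [Finset.mem_Ico] at hunot
    push_neg at hunot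
    rcases lt_or_ge u j with hu | hu
    · have : low G (b - 1) ≤ u := Nat.sInf_le (Or.inr hadj)
      omega
    · have : u = i := by have := hunot hu; omega
      exact hnadj (this ▸ hadj)
  rw [g1I, gval, hempty, sInf_empty]
end

section
/- Let i ∈ [1,n] with b = low(i) > 1 and let j ∈ [1,i). If low(b−1) < j < low(b, i−1), then γ^1_{[1,2]}(j,i:i) = γ^0_{[1,2]}(j, b−1) + 1. -/
/-- Lemma (ii): with `b = low(i) > 1`, if `low(b-1) < j < low(b, i-1)` then
`γ¹_{[1,2]}(j,i:i) = γ⁰_{[1,2]}(j, b-1) + 1`. -/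
theorem g1I_eq_g0I_add_one (G : SimpleGraph ℕ) (n : ℕ) (hn : 1 ≤ n)
    (hG : GoodNumbering G n) (i j b : ℕ) (hi : i ∈ Finset.Icc 1 n)
    (hbdef : b = low G i) (hb : 1 < b) (hj : j ∈ Finset.Ico 1 i)
    (h1 : low G (b - 1) < j) (h2 : j < lowI G b (i - 1)) :
    g1I G j i = g0I G j (b - 1) + 1 := by
  obtain ⟨hi1, hin⟩ := Finset.mem_Icc.mp hi
  obtain ⟨hj1, hji⟩ := Finset.mem_Ico.mp hj
  -- basic facts about `low`
  have hNi : i ∈ {x : ℕ | x = i ∨ G.Adj i x} := Or.inl rfl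
  have hble : b ≤ i := hbdef ▸ Nat.sInf_le hNi
  have hbmem : b = i ∨ G.Adj i b := by
    have := Nat.sInf_mem (⟨i, hNi⟩ : {x : ℕ | x = i ∨ G.Adj i x}.Nonempty)
    rw [hbdef]; exact this
  -- F2 : vertices below b are not adjacent to i
  have F2 : ∀ v, v < b → ¬ G.Adj v i := by
    intro v hv hadj
    have : b ≤ v := hbdef ▸ Nat.sInf_le (Or.inr hadj.symm)
    omega
  -- F3 : b < i
  have F3 : b < i := by
    rcases lt_or_eq_of_le hble with h | h
    · exact h
    · exfalso
      have hempty : Set.Icc b (i - 1) = ∅ := Set.Icc_eq_empty (by omega)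
      have : lowI G b (i - 1) = 0 := by
        rw [lowI, hempty, Set.image_empty, Nat.sInf_empty]
      omega
  have hAdjbi : G.Adj b i := by
    rcases hbmem with h | h
    · omega
    · exact h.symm
  -- F5 : for k ∈ [b, i-1], j < low k
  have F5 : ∀ k, b ≤ k → k ≤ i - 1 → j < low G k := by
    intro k hbk hki
    have : lowI G b (i - 1) ≤ low G k :=
      Nat.sInf_le ⟨k, ⟨hbk, hki⟩, rfl⟩
    omega
  have hlowb_le : low G b ≤ b := Nat.sInf_le (Or.inl rfl)
  -- F6 : j < b
  have F6 : j < b := by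
    have := F5 b le_rfl (by omega)
    omega
  -- F4 : every v ∈ [b, i) is adjacent to i
  have F4 : ∀ v, b ≤ v → v < i → G.Adj v i := by
    intro v hbv hvi
    rcases lt_or_eq_of_le hbv with h | h
    · exact hG.2 b v i h hvi hAdjbi
    · exact h ▸ hAdjbi
  -- F7 : every neighbor of a vertex in [b, i-1] is > j
  have F7 : ∀ v, b ≤ v → v ≤ i - 1 → ∀ u, G.Adj v u → j < u := by
    intro v hbv hvi u hadj
    have h1 : low G v ≤ u := Nat.sInf_le (Or.inr hadj)
    have := F5 v hbv hvi
    omega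
  -- the two solution sets
  set S1 : Set ℕ∞ := {k : ℕ∞ | ∃ D : Finset ℕ, Dom12 G i D ∧
      (i ∈ D ∧ ∀ x ∈ Finset.Ico j i, x ∉ D) ∧ (D.card : ℕ∞) = k} with hS1
  set S0 : Set ℕ∞ := {k : ℕ∞ | ∃ D : Finset ℕ, Dom12 G (b - 1) D ∧
      (∀ x ∈ Finset.Icc j (b - 1), x ∉ D) ∧ (D.card : ℕ∞) = k} with hS0
  have hg1 : g1I G j i = sInf S1 := rfl
  have hg0 : g0I G j (b - 1) = sInf S0 := rfl
  rw [hg1, hg0]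
  apply le_antisymm
  · -- sInf S1 ≤ sInf S0 + 1
    rcases Set.eq_empty_or_nonempty S0 with h | h
    · simp [h]
    · obtain ⟨D', hDom', hP', hcard'⟩ := csInf_mem h
      have hsub' : D' ⊆ Finset.Icc 1 (b - 1) := hDom'.1
      have hiD' : i ∉ D' := by
        intro hmem
        have := Finset.mem_Icc.mp (hsub' hmem)
        omega
      have hDom : Dom12 G i (insert i D') := by
        constructor
        · intro x hx
          rcases Finset.mem_insert.mp hx with h | h
          · subst h; exact Finset.mem_Icc.mpr ⟨hi1, le_rfl⟩
          · have := Finset.mem_Icc.mp (hsub' h)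
            exact Finset.mem_Icc.mpr ⟨this.1, by omega⟩
        · intro v hv hvD
          have hv' := Finset.mem_Icc.mp hv
          have hvne : v ≠ i := fun h => hvD (h ▸ Finset.mem_insert_self i D')
          have hvD' : v ∉ D' := fun h => hvD (Finset.mem_insert_of_mem h)
          rcases lt_or_ge v b with hvb | hbv
          · -- v < b : same neighborhood as with D'
            have hset : {u ∈ ((insert i D' : Finset ℕ) : Set ℕ) | G.Adj v u}
                = {u ∈ (D' : Set ℕ) | G.Adj v u} := by
              ext u
              simp only [Set.mem_setOf_eq, Finset.coe_insert, Set.mem_insert_iff,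
                Finset.mem_coe]
              constructor
              · rintro ⟨h | h, hadj⟩
                · exact absurd (h ▸ hadj) (F2 v hvb)
                · exact ⟨h, hadj⟩
              · rintro ⟨h, hadj⟩
                exact ⟨Or.inr h, hadj⟩
            rw [hset]
            exact hDom'.2 v (Finset.mem_Icc.mpr ⟨hv'.1, by omega⟩) hvD'
          · -- b ≤ v < i : exactly the neighbor i
            have hvi : v < i := lt_of_le_of_ne hv'.2 hvne
            have hset : {u ∈ ((insert i D' : Finset ℕ) : Set ℕ) | G.Adj v u}
                = {i} := by
              ext u
              simp only [Set.mem_setOf_eq, Finset.coe_insert, Set.mem_insert_iff,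
                Finset.mem_coe, Set.mem_singleton_iff]
              constructor
              · rintro ⟨h | h, hadj⟩
                · exact h
                · exfalso
                  have hub := Finset.mem_Icc.mp (hsub' h)
                  have hju : j < u := F7 v hbv (by omega) u hadj
                  exact hP' u (Finset.mem_Icc.mpr ⟨by omega, hub.2⟩) h
              · rintro rfl
                exact ⟨Or.inl rfl, F4 v hbv hvi⟩
            rw [hset, Set.ncard_singleton]
            omega
      refine sInf_le ⟨insert i D', hDom, ⟨Finset.mem_insert_self i D', ?_⟩, ?_⟩
      · intro x hx hmem
        have hx' := Finset.mem_Ico.mp hx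
        rcases Finset.mem_insert.mp hmem with h | h
        · omega
        · have := Finset.mem_Icc.mp (hsub' h)
          exact hP' x (Finset.mem_Icc.mpr ⟨hx'.1, this.2⟩) h
      · rw [Finset.card_insert_of_notMem hiD', Nat.cast_add, Nat.cast_one, hcard']
  · -- sInf S0 + 1 ≤ sInf S1
    rcases Set.eq_empty_or_nonempty S1 with h | h
    · simp [h]
    · obtain ⟨D, hDom, ⟨hiD, hPD⟩, hcard⟩ := csInf_mem h
      set D' := D.erase i with hD'
      have hsubD := hDom.1
      have hsub' : D' ⊆ Finset.Icc 1 (b - 1) := by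
        intro x hx
        obtain ⟨hxi, hxD⟩ := Finset.mem_erase.mp hx
        have hx' := Finset.mem_Icc.mp (hsubD hxD)
        have hxlt : x < i := lt_of_le_of_ne hx'.2 hxi
        have hxj : x < j := by
          by_contra hc
          exact hPD x (Finset.mem_Ico.mpr ⟨by omega, hxlt⟩) hxD
        exact Finset.mem_Icc.mpr ⟨hx'.1, by omega⟩
      have hDom' : Dom12 G (b - 1) D' := by
        refine ⟨hsub', ?_⟩
        intro v hv hvD'
        have hv' := Finset.mem_Icc.mp hv
        have hvi : v ≠ i := by omega
        have hvD : v ∉ D := by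
          intro hmem
          exact hvD' (Finset.mem_erase.mpr ⟨hvi, hmem⟩)
        have hset : {u ∈ (D' : Set ℕ) | G.Adj v u} = {u ∈ (D : Set ℕ) | G.Adj v u} := by
          ext u
          simp only [Set.mem_setOf_eq, hD', Finset.coe_erase, Set.mem_diff,
            Finset.mem_coe, Set.mem_singleton_iff]
          constructor
          · rintro ⟨⟨h, _⟩, hadj⟩
            exact ⟨h, hadj⟩
          · rintro ⟨h, hadj⟩
            refine ⟨⟨h, ?_⟩, hadj⟩
            rintro rfl
            exact F2 v (by omega) hadj
        rw [hset]
        exact hDom.2 v (Finset.mem_Icc.mpr ⟨hv'.1, by omega⟩) hvD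
      have hP' : ∀ x ∈ Finset.Icc j (b - 1), x ∉ D' := by
        intro x hx hmem
        have hx' := Finset.mem_Icc.mp hx
        obtain ⟨hxi, hxD⟩ := Finset.mem_erase.mp hmem
        exact hPD x (Finset.mem_Ico.mpr ⟨hx'.1, by omega⟩) hxD
      have hle : sInf S0 ≤ (D'.card : ℕ∞) := sInf_le ⟨D', hDom', hP', rfl⟩
      have hcards : D'.card + 1 = D.card := Finset.card_erase_add_one hiD
      calc sInf S0 + 1 ≤ (D'.card : ℕ∞) + 1 := add_le_add_left hle 1
        _ = ((D'.card + 1 : ℕ) : ℕ∞) := by rw [Nat.cast_add, Nat.cast_one]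
        _ = (D.card : ℕ∞) := by rw [hcards]
        _ = sInf S1 := hcard
end

section
/- Let i ∈ [1,n], j ∈ [1,i), k ∈ [1,j], b = low(i), and c = low(j). If either (j < b and j < low(x) for some x ∈ (j,b)) or (k < min{b,c} and k ≤ low(x) for some x ∈ [k, min{b,c})), then γ^1_{[1,2]}(k,i:i,j) = ∞ (i.e., is not defined: there is no [1,2]-dominating set D of G[1,i] with i,j ∈ D and D ∩ ([k,i)\{j}) = ∅). -/
/-- Lemma (i): with `b = low(i)` and `c = low(j)`, if either (`j < b` and
`j < low(x)` for some `x ∈ (j,b)`) or (`k < min b c` and `k ≤ low(x)` for some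
`x ∈ [k, min b c)`), then `γ¹_{[1,2]}(k,i:i,j)` is not defined (equals `⊤`). -/
theorem g1Ij_eq_top (G : SimpleGraph ℕ) (n : ℕ) (hn : 1 ≤ n)
    (hG : GoodNumbering G n) (i j k b c : ℕ) (hi : i ∈ Finset.Icc 1 n)
    (hj : j ∈ Finset.Ico 1 i) (hk : k ∈ Finset.Icc 1 j)
    (hbdef : b = low G i) (hcdef : c = low G j)
    (hcond : (j < b ∧ ∃ x ∈ Finset.Ioo j b, j < low G x) ∨
             (k < min b c ∧ ∃ x ∈ Finset.Ico k (min b c), k ≤ low G x)) :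
    g1Ij G k i j = ⊤ := by
  subst hbdef hcdef
  simp only [Finset.mem_Icc, Finset.mem_Ico] at hi hj hk
  have lowle : ∀ a u : ℕ, (u = a ∨ G.Adj a u) → low G a ≤ u := fun a u h => Nat.sInf_le h
  have hbi : low G i ≤ i := lowle i i (Or.inl rfl)
  have hcj : low G j ≤ j := lowle j j (Or.inl rfl)
  rw [g1Ij, gval]
  convert sInf_empty
  · rfl
  rw [Set.eq_empty_iff_forall_notMem]
  rintro m ⟨D, ⟨hDsub, hDdom⟩, ⟨hiD, hjD, hno⟩, rfl⟩
  -- In both cases we find x ∈ [1,i], x ∉ D, with no neighbor in D.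
  obtain ⟨x, hx1, hxi, hxD, hbad⟩ :
      ∃ x, 1 ≤ x ∧ x < i ∧ x ∉ D ∧ ∀ u ∈ D, ¬ G.Adj x u := by
    rcases hcond with ⟨hjb, x, hx, hlx⟩ | ⟨hkbc, x, hx, hlx⟩
    · simp only [Finset.mem_Ioo] at hx
      have hxi : x < i := lt_of_lt_of_le hx.2 hbi
      refine ⟨x, le_trans hj.1 (le_of_lt hx.1), hxi, ?_, ?_⟩
      · exact hno x (Finset.mem_Ico.mpr ⟨le_trans hk.2 (le_of_lt hx.1), hxi⟩)
          (by omega)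
      · intro u huD hadj
        have hlu : low G x ≤ u := lowle x u (Or.inr hadj)
        have hu : 1 ≤ u ∧ u ≤ i := Finset.mem_Icc.mp (hDsub huD)
        rcases lt_or_ge u i with hui | hui
        · have : u = j := by
            by_contra hne
            exact hno u (Finset.mem_Ico.mpr ⟨by omega, hui⟩) hne huD
          omega
        · have hui' : u = i := le_antisymm hu.2 hui
          rw [hui'] at hadj
          have : low G i ≤ x := lowle i x (Or.inr hadj.symm)
          omega
    · simp only [Finset.mem_Ico] at hx
      have hxj : x < j := lt_of_lt_of_le (lt_of_lt_of_le hx.2 (min_le_right _ _)) hcj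
      have hxi : x < i := lt_trans hxj hj.2
      refine ⟨x, le_trans hk.1 hx.1, hxi, ?_, ?_⟩
      · exact hno x (Finset.mem_Ico.mpr ⟨hx.1, hxi⟩) (by omega)
      · intro u huD hadj
        have hlu : low G x ≤ u := lowle x u (Or.inr hadj)
        have hu : 1 ≤ u ∧ u ≤ i := Finset.mem_Icc.mp (hDsub huD)
        rcases lt_or_ge u i with hui | hui
        · have huj : u = j := by
            by_contra hne
            exact hno u (Finset.mem_Ico.mpr ⟨by omega, hui⟩) hne huD
          rw [huj] at hadj
          have : low G j ≤ x := lowle j x (Or.inr hadj.symm)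
          omega
        · have hui' : u = i := le_antisymm hu.2 hui
          rw [hui'] at hadj
          have : low G i ≤ x := lowle i x (Or.inr hadj.symm)
          omega
  obtain ⟨h1, _⟩ := hDdom x (Finset.mem_Icc.mpr ⟨hx1, le_of_lt hxi⟩) hxD
  have hempty : {u ∈ (D : Set ℕ) | G.Adj x u} = ∅ := by
    ext u
    simp only [Set.mem_setOf_eq, Set.mem_empty_iff_false, iff_false, not_and]
    intro huD hadj
    exact hbad u huD hadj
  rw [hempty, Set.ncard_empty] at h1
  omega
end
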